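/- Let F : ℝ^N × ℝ^d → ℝ^N be continuous, D_N ⊆ ℝ^N closed, D_d ⊆ ℝ^d compact, with F(D_N × D_d) ⊆ D_N, and suppose there exists 0 < c < 1 such that ‖F(x₁,z) − F(x₂,z)‖ ≤ c‖x₁ − x₂‖ for all x₁,x₂ ∈ D_N and z ∈ D_d. Then there exists a compact subset W ⊆ D_N such that F(W × D_d) ⊆ W. -/

import Mathlib

/-- A continuous state map `F` on a closed state set `D_N` with compact
input set `D_d`, leaving `D_N` invariant and uniformly contracting in the state
variable, admits a compact invariant subset `W ⊆ D_N`. -/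
theorem stmt0 {N d : ℕ}
    (F : EuclideanSpace ℝ (Fin N) → EuclideanSpace ℝ (Fin d) → EuclideanSpace ℝ (Fin N))
    (DN : Set (EuclideanSpace ℝ (Fin N))) (Dd : Set (EuclideanSpace ℝ (Fin d)))
    (hF : Continuous fun p : EuclideanSpace ℝ (Fin N) × EuclideanSpace ℝ (Fin d) => F p.1 p.2)
    (hDN : IsClosed DN) (hDd : IsCompact Dd)
    (hinv : ∀ x ∈ DN, ∀ z ∈ Dd, F x z ∈ DN)
    (c : ℝ) (hc0 : 0 < c) (hc1 : c < 1)
    (hcontr : ∀ x₁ ∈ DN, ∀ x₂ ∈ DN, ∀ z ∈ Dd, ‖F x₁ z - F x₂ z‖ ≤ c * ‖x₁ - x₂‖) :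
    ∃ W ⊆ DN, IsCompact W ∧ ∀ x ∈ W, ∀ z ∈ Dd, F x z ∈ W := by
  rcases DN.eq_empty_or_nonempty with h | ⟨p, hp⟩
  · exact ⟨∅, by simp, isCompact_empty, by simp⟩
  rcases Dd.eq_empty_or_nonempty with h | hDdne
  · exact ⟨{p}, by simpa using hp, isCompact_singleton, by simp [h]⟩
  -- M = sup over z ∈ Dd of ‖F p z - p‖
  have hcont : ContinuousOn (fun z => ‖F p z - p‖) Dd := by
    apply Continuous.continuousOn
    exact (hF.comp (continuous_const.prodMk continuous_id)).sub continuous_const |>.norm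
  obtain ⟨z₀, hz₀, hmax⟩ := hDd.exists_isMaxOn hDdne hcont
  set M : ℝ := ‖F p z₀ - p‖ with hM
  have hM0 : 0 ≤ M := norm_nonneg _
  set R : ℝ := M / (1 - c) with hR
  have h1c : 0 < 1 - c := by linarith
  have hR0 : 0 ≤ R := div_nonneg hM0 h1c.le
  refine ⟨DN ∩ Metric.closedBall p R, Set.inter_subset_left,
    (isCompact_closedBall p R).inter_left hDN, ?_⟩
  rintro x ⟨hxD, hxB⟩ z hz
  refine ⟨hinv x hxD z hz, ?_⟩
  rw [Metric.mem_closedBall] at hxB ⊢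
  rw [dist_eq_norm] at hxB ⊢
  calc ‖F x z - p‖ ≤ ‖F x z - F p z‖ + ‖F p z - p‖ := norm_sub_le_norm_sub_add_norm_sub _ _ _
    _ ≤ c * ‖x - p‖ + M := add_le_add (hcontr x hxD p hp z hz) (hmax hz)
    _ ≤ c * R + M := by nlinarith
    _ = R := by rw [hR]; field_simp; ring
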